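/- Let V = V_1 ⊕ V_2 be a direct sum of F_2-vector spaces, and for i = 1, 2 let H_i be a hyperplane of V_i and A_i = V_i \ H_i. Then E = A_1 ∪ A_2 ⊆ V \ {0} is triangle-free and I_5-free. -/

import Mathlib

open Submodule Module

def TriangleFreeG {V : Type*} [AddCommGroup V] [Module (ZMod 2) V] (E : Set V) : Prop :=
  ∀ a ∈ E, ∀ b ∈ E, a + b ∉ E

def IFreeG (n : ℕ) {V : Type*} [AddCommGroup V] [Module (ZMod 2) V] (E : Set V) : Prop :=
  ¬ ∃ S : Finset V, S.card = n ∧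
      LinearIndependent (ZMod 2) (Subtype.val : ↥(S : Set V) → V) ∧
      E ∩ (span (ZMod 2) (S : Set V) : Set V) = (S : Set V)

lemma char2_add_self {V : Type*} [AddCommGroup V] [Module (ZMod 2) V] (x : V) : x + x = 0 := by
  rw [← two_smul (ZMod 2) x, show (2:ZMod 2) = 0 from rfl, zero_smul]

lemma char2_cancel {V : Type*} [AddCommGroup V] [Module (ZMod 2) V] {x y : V} :
    x + (x + y) = y := by rw [← add_assoc, char2_add_self, zero_add]

lemma hyp_sum {V : Type*} [AddCommGroup V] [Module (ZMod 2) V] [FiniteDimensional (ZMod 2) V]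
    (W H : Submodule (ZMod 2) V) (hH : H ≤ W)
    (hr : finrank (ZMod 2) H + 1 = finrank (ZMod 2) W)
    {x y : V} (hx : x ∈ W) (hxH : x ∉ H) (hy : y ∈ W) (hyH : y ∉ H) : x + y ∈ H := by
  set K := H ⊔ span (ZMod 2) {x} with hK
  have hKW : K ≤ W := sup_le hH (span_le.2 (by simpa using hx))
  have hlt : H < K := lt_of_le_of_ne le_sup_left (by
    intro h
    exact hxH (h ▸ (le_sup_right : span (ZMod 2) {x} ≤ K) (mem_span_singleton_self x)))
  have h1 : finrank (ZMod 2) H < finrank (ZMod 2) K := Submodule.finrank_lt_finrank_of_lt hlt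
  have h2 : finrank (ZMod 2) K ≤ finrank (ZMod 2) W := Submodule.finrank_mono hKW
  have hKeq : K = W := Submodule.eq_of_le_of_finrank_eq hKW (by omega)
  have hyK : y ∈ K := hKeq ▸ hy
  rcases mem_sup.1 hyK with ⟨h, hh, z, hz, hsum⟩
  rcases mem_span_singleton.1 hz with ⟨c, rfl⟩
  fin_cases c
  · exfalso; apply hyH; rw [← hsum]; change h + (0 : ZMod 2) • x ∈ H; simpa using hh
  · have hy' : y = h + x := by rw [← hsum]; change h + (1 : ZMod 2) • x = h + x; simp
    have : x + y = h := by rw [hy', add_comm h x, ← add_assoc, char2_add_self, zero_add]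
    rw [this]; exact hh

lemma indep4 {V : Type*} [AddCommGroup V] [Module (ZMod 2) V]
    (S : Finset V)
    (hli : LinearIndependent (ZMod 2) (Subtype.val : ↥(S : Set V) → V))
    {a b c x : V} (ha : a ∈ S) (hb : b ∈ S) (hc : c ∈ S) (hx : x ∈ S)
    (hab : a ≠ b) (hac : a ≠ c)
    (hxa : x ≠ a)
    (hsum : a + b + c = x) : False := by
  have hli' := linearIndepOn_iff.1 (linearIndependent_subtype_iff.1 hli)
  set l : V →₀ ZMod 2 :=
    Finsupp.single a 1 + Finsupp.single b 1 + Finsupp.single c 1 + Finsupp.single x 1 with hl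
  have hsupp : l ∈ Finsupp.supported (ZMod 2) (ZMod 2) (S : Set V) := by
    rw [Finsupp.mem_supported']
    intro v hv
    simp only [hl, Finsupp.add_apply, Finsupp.single_apply]
    have : v ≠ a := fun h => hv (h ▸ ha)
    have : v ≠ b := fun h => hv (h ▸ hb)
    have : v ≠ c := fun h => hv (h ▸ hc)
    have : v ≠ x := fun h => hv (h ▸ hx)
    simp_all [eq_comm]
  have htot : (Finsupp.linearCombination (ZMod 2) id) l = 0 := by
    simp only [hl, map_add, Finsupp.linearCombination_single, id, one_smul]
    rw [hsum, char2_add_self]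
  have := hli' l hsupp htot
  have := DFunLike.congr_fun this a
  simp only [hl, Finsupp.add_apply, Finsupp.coe_zero, Pi.zero_apply] at this
  rw [Finsupp.single_eq_same, Finsupp.single_eq_of_ne hab,
    Finsupp.single_eq_of_ne hac, Finsupp.single_eq_of_ne hxa.symm] at this
  norm_num at this

lemma three_distinct {V : Type*} [DecidableEq V] {T : Finset V} (h : 3 ≤ T.card) :
    ∃ a ∈ T, ∃ b ∈ T, ∃ c ∈ T, a ≠ b ∧ a ≠ c ∧ b ≠ c := by
  obtain ⟨a, ha⟩ := (Finset.card_pos (s := T)).1 (by omega)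
  have h2 : 0 < (T.erase a).card := by
    rw [Finset.card_erase_of_mem ha]; omega
  obtain ⟨b, hb⟩ := (Finset.card_pos (s := T.erase a)).1 h2
  have h3 : 0 < ((T.erase a).erase b).card := by
    rw [Finset.card_erase_of_mem hb, Finset.card_erase_of_mem ha]; omega
  obtain ⟨c, hcm⟩ := (Finset.card_pos (s := (T.erase a).erase b)).1 h3
  refine ⟨a, ha, b, Finset.mem_of_mem_erase hb, c,
    Finset.mem_of_mem_erase (Finset.mem_of_mem_erase hcm), ?_, ?_, ?_⟩
  · exact fun h => (Finset.ne_of_mem_erase hb) h.symm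
  · exact fun h => (Finset.ne_of_mem_erase (Finset.mem_of_mem_erase hcm)) h.symm
  · exact fun h => (Finset.ne_of_mem_erase hcm) h.symm

lemma i5_core {V : Type*} [AddCommGroup V] [Module (ZMod 2) V] [FiniteDimensional (ZMod 2) V]
    (W H : Submodule (ZMod 2) V) (hH : H ≤ W)
    (hr : finrank (ZMod 2) H + 1 = finrank (ZMod 2) W)
    (E : Set V) (hWE : (W : Set V) \ (H : Set V) ⊆ E)
    (S : Finset V)
    (hli : LinearIndependent (ZMod 2) (Subtype.val : ↥(S : Set V) → V))
    (hspan : E ∩ (span (ZMod 2) (S : Set V) : Set V) = (S : Set V))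
    {a b c : V} (ha : a ∈ S) (hb : b ∈ S) (hc : c ∈ S)
    (hab : a ≠ b) (hac : a ≠ c) (hbc : b ≠ c)
    (haA : a ∈ (W : Set V) \ (H : Set V)) (hbA : b ∈ (W : Set V) \ (H : Set V))
    (hcA : c ∈ (W : Set V) \ (H : Set V)) : False := by
  set x := a + b + c with hx
  have hxW : x ∈ W := add_mem (add_mem haA.1 hbA.1) hcA.1
  have habH : a + b ∈ H := hyp_sum W H hH hr haA.1 haA.2 hbA.1 hbA.2
  have hxH : x ∉ H := by
    intro hxh
    apply hcA.2
    have : c = (a + b) + x := by rw [hx, char2_cancel]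
    rw [this]; exact add_mem habH hxh
  have hxE : x ∈ E := hWE ⟨hxW, hxH⟩
  have hxspan : x ∈ (span (ZMod 2) (S : Set V) : Set V) :=
    add_mem (add_mem (subset_span ha) (subset_span hb)) (subset_span hc)
  have hxS : x ∈ S := by
    have : x ∈ E ∩ (span (ZMod 2) (S : Set V) : Set V) := ⟨hxE, hxspan⟩
    rw [hspan] at this; exact this
  by_cases hxa : x = a
  · -- b + c = 0 so b = c
    apply hbc
    have h0 : b + c = 0 := by
      have : a + (b + c) = a + 0 := by rw [add_zero, ← add_assoc, ← hx, hxa]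
      exact add_left_cancel this
    have : b = b + (b + c) := by rw [h0, add_zero]
    rw [this, char2_cancel]
  by_cases hxb : x = b
  · apply hac
    have hb' : a + b + c = b := by rw [← hx]; exact hxb
    have h0 : a + c = 0 := by
      have : (a + c) + b = 0 + b := by
        rw [zero_add, show (a + c) + b = a + b + c by abel]; exact hb'
      exact add_right_cancel this
    have : a = a + (a + c) := by rw [h0, add_zero]
    rw [this, char2_cancel]
  by_cases hxc : x = c
  · apply hab
    have hc' : a + b + c = c := by rw [← hx]; exact hxc
    have h0 : a + b = 0 := by
      have : (a + b) + c = 0 + c := by rw [zero_add]; exact hc'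
      exact add_right_cancel this
    have : a = a + (a + b) := by rw [h0, add_zero]
    rw [this, char2_cancel]
  exact indep4 S hli ha hb hc hxS hab hac hxa hx.symm

theorem stmt15 {V : Type*} [AddCommGroup V] [Module (ZMod 2) V]
    [FiniteDimensional (ZMod 2) V]
    (V₁ V₂ H₁ H₂ : Submodule (ZMod 2) V) (hc : IsCompl V₁ V₂)
    (hH₁ : H₁ ≤ V₁) (hH₂ : H₂ ≤ V₂)
    (hr₁ : Module.finrank (ZMod 2) H₁ + 1 = Module.finrank (ZMod 2) V₁)
    (hr₂ : Module.finrank (ZMod 2) H₂ + 1 = Module.finrank (ZMod 2) V₂) :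
    TriangleFreeG (((V₁ : Set V) \ (H₁ : Set V)) ∪ ((V₂ : Set V) \ (H₂ : Set V))) ∧
    IFreeG 5 (((V₁ : Set V) \ (H₁ : Set V)) ∪ ((V₂ : Set V) \ (H₂ : Set V))) := by
  have hdisj : ∀ v : V, v ∈ V₁ → v ∈ V₂ → v = 0 := fun v h1 h2 =>
    (Submodule.disjoint_def.1 hc.disjoint) v h1 h2
  set A₁ := (V₁ : Set V) \ (H₁ : Set V) with hA1
  set A₂ := (V₂ : Set V) \ (H₂ : Set V) with hA2
  constructor
  · -- triangle free
    rintro p hp q hq hpq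
    -- first show: a ∈ A₁, b ∈ A₂ → a + b ∉ A₁ ∪ A₂ handled by cases
    have key : ∀ a b : V, a ∈ A₁ → b ∈ A₂ → a + b ∉ A₁ ∪ A₂ := by
      rintro a b ⟨haV, haH⟩ ⟨hbV, hbH⟩ (⟨hV, _⟩ | ⟨hV, _⟩)
      · have : b ∈ V₁ := by
          have : b = a + (a + b) := (char2_cancel).symm
          rw [this]; exact add_mem haV hV
        exact hbH (hdisj b this hbV ▸ zero_mem H₂)
      · have : a ∈ V₂ := by
          have : a = (a + b) + b := by rw [add_assoc, char2_add_self, add_zero]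
          rw [this]; exact add_mem hV hbV
        exact haH (hdisj a haV this ▸ zero_mem H₁)
    have same : ∀ (W H : Submodule (ZMod 2) V) (W' H' : Submodule (ZMod 2) V),
        H ≤ W → finrank (ZMod 2) H + 1 = finrank (ZMod 2) W →
        (∀ v : V, v ∈ W → v ∈ W' → v = 0) →
        ∀ a b : V, a ∈ (W : Set V) \ H → b ∈ (W : Set V) \ H →
        a + b ∉ ((W : Set V) \ (H : Set V)) ∪ ((W' : Set V) \ (H' : Set V)) := by
      rintro W H W' H' hHW hr hd a b ⟨haV, haH⟩ ⟨hbV, hbH⟩ (⟨_, hH'⟩ | ⟨hV', hH''⟩)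
      · exact hH' (hyp_sum W H hHW hr haV haH hbV hbH)
      · have h0 : a + b = 0 := hd _ (add_mem haV hbV) hV'
        exact hH'' (by rw [h0]; exact zero_mem H')
    rcases hp with hp1 | hp2 <;> rcases hq with hq1 | hq2
    · exact same V₁ H₁ V₂ H₂ hH₁ hr₁ hdisj p q hp1 hq1 hpq
    · exact key p q hp1 hq2 hpq
    · have : q + p ∉ A₁ ∪ A₂ := key q p hq1 hp2
      rw [add_comm] at this; exact this hpq
    · have : q + p ∉ A₂ ∪ A₁ := same V₂ H₂ V₁ H₁ hH₂ hr₂ (fun v h1 h2 => hdisj v h2 h1) q p hq2 hp2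
      rw [add_comm, Set.union_comm] at this; exact this hpq
  · -- I5 free
    rintro ⟨S, hcard, hli, hspan⟩
    classical
    have hSE : ∀ v ∈ S, v ∈ A₁ ∪ A₂ := by
      intro v hv
      have : v ∈ (A₁ ∪ A₂) ∩ (span (ZMod 2) (S : Set V) : Set V) := by rw [hspan]; exact hv
      exact this.1
    set S₁ := S.filter (· ∈ A₁) with hS1
    set S₂ := S.filter (· ∈ A₂) with hS2
    have hcup : S ⊆ S₁ ∪ S₂ := by
      intro v hv
      rcases hSE v hv with h | h
      · exact Finset.mem_union_left _ (Finset.mem_filter.2 ⟨hv, h⟩)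
      · exact Finset.mem_union_right _ (Finset.mem_filter.2 ⟨hv, h⟩)
    have hcards : 5 ≤ S₁.card + S₂.card := by
      calc 5 = S.card := hcard.symm
        _ ≤ (S₁ ∪ S₂).card := Finset.card_le_card hcup
        _ ≤ S₁.card + S₂.card := Finset.card_union_le _ _
    rcases (by omega : 3 ≤ S₁.card ∨ 3 ≤ S₂.card) with h3 | h3
    · obtain ⟨a, haT, b, hbT, c, hcT, hab, hac, hbc⟩ := three_distinct h3
      have hm : ∀ x ∈ S₁, x ∈ S ∧ x ∈ A₁ := fun x hx => Finset.mem_filter.1 hx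
      exact i5_core V₁ H₁ hH₁ hr₁ (A₁ ∪ A₂) Set.subset_union_left S hli hspan
        (hm a haT).1 (hm b hbT).1 (hm c hcT).1 hab hac hbc
        (hm a haT).2 (hm b hbT).2 (hm c hcT).2
    · obtain ⟨a, haT, b, hbT, c, hcT, hab, hac, hbc⟩ := three_distinct h3
      have hm : ∀ x ∈ S₂, x ∈ S ∧ x ∈ A₂ := fun x hx => Finset.mem_filter.1 hx
      exact i5_core V₂ H₂ hH₂ hr₂ (A₁ ∪ A₂) Set.subset_union_right S hli hspan
        (hm a haT).1 (hm b hbT).1 (hm c hcT).1 hab hac hbc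
        (hm a haT).2 (hm b hbT).2 (hm c hcT).2
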